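/- Fix δ > 0, ω_0 ≥ 0, f > 0 and w_0 ∈ ℝ with ω_0² − w_0² f² ≥ 0, and let a, b, c, w : (0, δ) → ℝ. Assume: a(ρ) ≠ 0, b(ρ)² − a(ρ) c(ρ) > 0 and ω_0² + w(ρ)² a(ρ) ≥ 0 for all ρ; and as ρ → 0 from the right: a(ρ) → −f², b(ρ)/ρ → 0, (b(ρ)² − a(ρ) c(ρ))/ρ² → f², and w(ρ)² → w_0². Define R_±(ρ) = ±(b(ρ)/a(ρ)) ω_0 + (1/a(ρ)) √(b(ρ)² − a(ρ) c(ρ)) √(ω_0² + w(ρ)² a(ρ)). Then, as ρ → 0 from the right, R_±(ρ) → 0 and R_±(ρ)/ρ → −√(ω_0² − w_0² f²) / f (for both choices of sign). -/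

import Mathlib

open Real Filter Topology Set

/-- Near a regular axis (`a → −f²`, `b/ρ → 0`, `(b² − a c)/ρ² → f²`, `w² → w₀²`),
both potentials satisfy `R_± → 0` and `R_±/ρ → −√(ω₀² − w₀² f²)/f` as `ρ → 0⁺`. -/
theorem stmt12 (δ ω0 f w0 : ℝ) (hδ : 0 < δ) (hω0 : 0 ≤ ω0) (hf : 0 < f)
    (hfl : 0 ≤ ω0 ^ 2 - w0 ^ 2 * f ^ 2)
    (a b c w : ℝ → ℝ)
    (hcond : ∀ ρ ∈ Set.Ioo (0 : ℝ) δ,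
      a ρ ≠ 0 ∧ 0 < b ρ ^ 2 - a ρ * c ρ ∧ 0 ≤ ω0 ^ 2 + w ρ ^ 2 * a ρ)
    (ha : Tendsto a (𝓝[>] 0) (𝓝 (-f ^ 2)))
    (hb : Tendsto (fun ρ => b ρ / ρ) (𝓝[>] 0) (𝓝 0))
    (hdet : Tendsto (fun ρ => (b ρ ^ 2 - a ρ * c ρ) / ρ ^ 2) (𝓝[>] 0) (𝓝 (f ^ 2)))
    (hw : Tendsto (fun ρ => w ρ ^ 2) (𝓝[>] 0) (𝓝 (w0 ^ 2)))
    (Rp Rm : ℝ → ℝ)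
    (hRp : ∀ ρ, Rp ρ = (b ρ / a ρ) * ω0 +
      (1 / a ρ) * Real.sqrt (b ρ ^ 2 - a ρ * c ρ) * Real.sqrt (ω0 ^ 2 + w ρ ^ 2 * a ρ))
    (hRm : ∀ ρ, Rm ρ = -(b ρ / a ρ) * ω0 +
      (1 / a ρ) * Real.sqrt (b ρ ^ 2 - a ρ * c ρ) * Real.sqrt (ω0 ^ 2 + w ρ ^ 2 * a ρ)) :
    Tendsto Rp (𝓝[>] 0) (𝓝 0) ∧ Tendsto Rm (𝓝[>] 0) (𝓝 0) ∧
    Tendsto (fun ρ => Rp ρ / ρ) (𝓝[>] 0)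
      (𝓝 (-Real.sqrt (ω0 ^ 2 - w0 ^ 2 * f ^ 2) / f)) ∧
    Tendsto (fun ρ => Rm ρ / ρ) (𝓝[>] 0)
      (𝓝 (-Real.sqrt (ω0 ^ 2 - w0 ^ 2 * f ^ 2) / f)) := by
  have hmem : Set.Ioo (0 : ℝ) δ ∈ 𝓝[>] (0 : ℝ) :=
    Ioo_mem_nhdsGT_of_mem (by simp [hδ.le, hδ])
  have hf2 : (-f ^ 2 : ℝ) ≠ 0 := neg_ne_zero.mpr (by positivity)
  -- limit of 1/a
  have hainv : Tendsto (fun ρ => 1 / a ρ) (𝓝[>] 0) (𝓝 (1 / (-f ^ 2))) :=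
    (tendsto_const_nhds.div ha hf2)
  -- limit of sqrt (det/ρ²)
  have hsd : Tendsto (fun ρ => Real.sqrt ((b ρ ^ 2 - a ρ * c ρ) / ρ ^ 2)) (𝓝[>] 0)
      (𝓝 f) := by
    have := (Real.continuous_sqrt.tendsto (f ^ 2)).comp hdet
    simpa [Function.comp_def, Real.sqrt_sq hf.le] using this
  -- limit of sqrt (ω0² + w² a)
  have hE : Tendsto (fun ρ => ω0 ^ 2 + w ρ ^ 2 * a ρ) (𝓝[>] 0)
      (𝓝 (ω0 ^ 2 - w0 ^ 2 * f ^ 2)) := by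
    have h1 : Tendsto (fun ρ => ω0 ^ 2 + w ρ ^ 2 * a ρ) (𝓝[>] 0)
        (𝓝 (ω0 ^ 2 + w0 ^ 2 * (-f ^ 2))) := Tendsto.add tendsto_const_nhds (hw.mul ha)
    convert h1 using 2
    ring
  have hse : Tendsto (fun ρ => Real.sqrt (ω0 ^ 2 + w ρ ^ 2 * a ρ)) (𝓝[>] 0)
      (𝓝 (Real.sqrt (ω0 ^ 2 - w0 ^ 2 * f ^ 2))) :=
    (Real.continuous_sqrt.tendsto _).comp hE
  -- key lemma for either sign
  have key : ∀ (s : ℝ) (R : ℝ → ℝ),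
      (∀ ρ, R ρ = s * (b ρ / a ρ) * ω0 +
        (1 / a ρ) * Real.sqrt (b ρ ^ 2 - a ρ * c ρ) * Real.sqrt (ω0 ^ 2 + w ρ ^ 2 * a ρ)) →
      Tendsto (fun ρ => R ρ / ρ) (𝓝[>] 0)
        (𝓝 (-Real.sqrt (ω0 ^ 2 - w0 ^ 2 * f ^ 2) / f)) := by
    intro s R hR
    have hlim : Tendsto
        (fun ρ => s * (b ρ / ρ) * (ω0 / a ρ) +
          (1 / a ρ) * Real.sqrt ((b ρ ^ 2 - a ρ * c ρ) / ρ ^ 2) *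
            Real.sqrt (ω0 ^ 2 + w ρ ^ 2 * a ρ)) (𝓝[>] 0)
        (𝓝 (s * 0 * (ω0 / (-f ^ 2)) +
          (1 / (-f ^ 2)) * f * Real.sqrt (ω0 ^ 2 - w0 ^ 2 * f ^ 2))) := by
      exact (((tendsto_const_nhds.mul hb).mul
        (tendsto_const_nhds.div ha hf2)).add ((hainv.mul hsd).mul hse))
    have hval : s * 0 * (ω0 / (-f ^ 2)) +
        (1 / (-f ^ 2)) * f * Real.sqrt (ω0 ^ 2 - w0 ^ 2 * f ^ 2)
          = -Real.sqrt (ω0 ^ 2 - w0 ^ 2 * f ^ 2) / f := by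
      field_simp
      ring
    rw [hval] at hlim
    refine hlim.congr' ?_
    filter_upwards [hmem] with ρ hρ
    obtain ⟨ha0, hd0, hE0⟩ := hcond ρ hρ
    have hρ0 : (0 : ℝ) < ρ := hρ.1
    have hsq : Real.sqrt ((b ρ ^ 2 - a ρ * c ρ) / ρ ^ 2)
        = Real.sqrt (b ρ ^ 2 - a ρ * c ρ) / ρ := by
      rw [Real.sqrt_div hd0.le, Real.sqrt_sq hρ0.le]
    rw [hsq, hR ρ]
    field_simp
  have hkp : Tendsto (fun ρ => Rp ρ / ρ) (𝓝[>] 0)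
      (𝓝 (-Real.sqrt (ω0 ^ 2 - w0 ^ 2 * f ^ 2) / f)) := by
    refine key 1 Rp (fun ρ => ?_)
    rw [hRp ρ]; ring
  have hkm : Tendsto (fun ρ => Rm ρ / ρ) (𝓝[>] 0)
      (𝓝 (-Real.sqrt (ω0 ^ 2 - w0 ^ 2 * f ^ 2) / f)) := by
    refine key (-1) Rm (fun ρ => ?_)
    rw [hRm ρ]; ring
  have hid : Tendsto (fun ρ : ℝ => ρ) (𝓝[>] 0) (𝓝 0) :=
    tendsto_id.mono_left nhdsWithin_le_nhds
  have hz : ∀ (R : ℝ → ℝ), Tendsto (fun ρ => R ρ / ρ) (𝓝[>] 0)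
      (𝓝 (-Real.sqrt (ω0 ^ 2 - w0 ^ 2 * f ^ 2) / f)) →
      Tendsto R (𝓝[>] 0) (𝓝 0) := by
    intro R hRlim
    have := hRlim.mul hid
    rw [mul_zero] at this
    refine this.congr' ?_
    filter_upwards [self_mem_nhdsWithin] with ρ hρ
    exact div_mul_cancel₀ _ (ne_of_gt hρ)
  exact ⟨hz Rp hkp, hz Rm hkm, hkp, hkm⟩
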